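/- Let R = k[x_1,...,x_n] with the S_n-action permuting variables, s_i the transposition (i, i+1), and B_i = R ⊗_{R^{s_i}} R. There is a short exact sequence of (R,R)-bimodules 0 → R → B_i → R_{s_i} → 0, where R maps in by 1 ↦ x_i⊗1 − 1⊗x_{i+1}, and R_{s_i} is R with right action twisted by s_i (m·r = m·(s_i r)). -/

import Mathlib

open TensorProduct MvPolynomial

section Aux

variable {k : Type*} [Field k] {n : ℕ} (a b : Fin n)

/-- `X a - X b` divides `f - rename (swap a b) f`. -/
theorem swap_sub_dvd (f : MvPolynomial (Fin n) k) :
    (X a - X b) ∣ f - rename (Equiv.swap a b) f := by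
  induction f using MvPolynomial.induction_on with
  | C c => simp
  | add p q hp hq =>
      have : p + q - rename (Equiv.swap a b) (p + q)
          = (p - rename (Equiv.swap a b) p) + (q - rename (Equiv.swap a b) q) := by
        rw [map_add]; ring
      rw [this]; exact dvd_add hp hq
  | mul_X p i hp =>
      have h1 : p * X i - rename (Equiv.swap a b) (p * X i)
          = (p - rename (Equiv.swap a b) p) * X i
            + rename (Equiv.swap a b) p * (X i - X (Equiv.swap a b i)) := by
        rw [map_mul, rename_X]; ring
      rw [h1]
      refine dvd_add (Dvd.dvd.mul_right hp _) (Dvd.dvd.mul_left ?_ _)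
      by_cases hia : i = a
      · subst hia; rw [Equiv.swap_apply_left]
      · by_cases hib : i = b
        · subst hib
          rw [Equiv.swap_apply_right]
          exact ⟨-1, by ring⟩
        · rw [Equiv.swap_apply_of_ne_of_ne hia hib, sub_self]
          exact dvd_zero _

end Aux

set_option maxHeartbeats 1600000 in
set_option synthInstance.maxHeartbeats 400000 in
theorem soergel_ses (k : Type*) [Field k] (hk : ringChar k ≠ 2) (n : ℕ)
    (a b : Fin n) (hab : (a : ℕ) + 1 = (b : ℕ))
    (A : Subalgebra k (MvPolynomial (Fin n) k))
    (hA : A = AlgHom.equalizer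
      (MvPolynomial.rename (R := k) (Equiv.swap a b)) (AlgHom.id k (MvPolynomial (Fin n) k))) :
    ∃ (φ : MvPolynomial (Fin n) k →ₗ[MvPolynomial (Fin n) k]
          (MvPolynomial (Fin n) k ⊗[A] MvPolynomial (Fin n) k))
      (ψ : (MvPolynomial (Fin n) k ⊗[A] MvPolynomial (Fin n) k) →ₗ[MvPolynomial (Fin n) k]
          MvPolynomial (Fin n) k),
      (∀ r : MvPolynomial (Fin n) k,
        φ r = ((r * MvPolynomial.X a) ⊗ₜ[A] (1 : MvPolynomial (Fin n) k)
            : MvPolynomial (Fin n) k ⊗[A] MvPolynomial (Fin n) k)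
          - r ⊗ₜ[A] MvPolynomial.X b) ∧
      (∀ f g : MvPolynomial (Fin n) k,
        ψ (f ⊗ₜ[A] g) = f * MvPolynomial.rename (Equiv.swap a b) g) ∧
      Function.Injective φ ∧ Function.Surjective ψ ∧ Function.Exact φ ψ := by
  classical
  set R := MvPolynomial (Fin n) k with hR
  set s : R →ₐ[k] R := (MvPolynomial.rename (R := k) (Equiv.swap a b)) with hs
  have hab' : a ≠ b := by
    intro h
    rw [h] at hab
    omega
  have hδ : (X a - X b : R) ≠ 0 := by
    rw [sub_ne_zero]
    exact fun h => hab' (MvPolynomial.X_injective h)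
  -- membership in A is invariance
  have hmem : ∀ f : R, f ∈ A ↔ s f = f := by
    intro f
    rw [hA]
    exact AlgHom.mem_equalizer _ _ f
  -- the Demazure-type operator
  have hdvd : ∀ f : R, (X a - X b : R) ∣ f - s f := fun f => swap_sub_dvd a b f
  let der : R → R := fun f => (hdvd f).choose
  have key : ∀ f : R, (X a - X b : R) * der f = f - s f := fun f => ((hdvd f).choose_spec).symm
  have uniq : ∀ (c : R) (f : R), (X a - X b : R) * c = f - s f → c = der f := by
    intro c f h
    exact mul_left_cancel₀ hδ (h.trans (key f).symm)
  have der_add : ∀ f g : R, der (f + g) = der f + der g := by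
    intro f g
    refine (uniq _ _ ?_).symm
    rw [mul_add, key, key, map_add]; ring
  have der_smul : ∀ (c : A) (f : R), der (c • f) = c • der f := by
    intro c f
    have hc : s (c : R) = (c : R) := (hmem _).1 c.2
    refine (uniq _ _ ?_).symm
    show (X a - X b : R) * ((c : R) * der f) = (c : R) * f - s ((c : R) * f)
    rw [map_mul, hc, mul_left_comm, key]; ring
  have hsXb : s (X b : R) = X a := by rw [hs, rename_X, Equiv.swap_apply_right]
  have hsXa : s (X a : R) = X b := by rw [hs, rename_X, Equiv.swap_apply_left]
  have hss : ∀ f : R, s (s f) = f := by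
    intro f
    rw [hs, rename_rename]
    have : (⇑(Equiv.swap a b) ∘ ⇑(Equiv.swap a b)) = id := by
      funext i; simp [Equiv.swap_apply_self]
    rw [this, rename_id, AlgHom.id_apply]
  have der_one : der (1 : R) = 0 := by
    refine (uniq _ _ ?_).symm
    simp
  have der_Xb : der (X b : R) = -1 := by
    refine (uniq _ _ ?_).symm
    rw [hsXb]
    ring
  have der_invariant : ∀ f : R, s (der f) = der f := by
    intro f
    have h1 : s ((X a - X b : R) * der f) = s f - f := by rw [key, map_sub, hss]
    rw [map_mul, map_sub, hsXa, hsXb] at h1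
    have h3 : (X a - X b : R) * s (der f) = f - s f := by linear_combination -h1
    exact mul_left_cancel₀ hδ (h3.trans (key f).symm)
  have der_memA : ∀ f : R, der f ∈ A := fun f => (hmem _).2 (der_invariant f)
  -- A-linear maps g ↦ s g and g ↦ der g
  let Ts : R →ₗ[A] R :=
    { toFun := fun g => s g
      map_add' := fun f g => map_add s f g
      map_smul' := fun c f => by
        show s ((c : R) * f) = (c : R) * s f
        rw [map_mul, (hmem _).1 c.2] }
  let Td : R →ₗ[A] R :=
    { toFun := der
      map_add' := der_add
      map_smul' := der_smul }
  -- the maps ψ and D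
  let ψ : (R ⊗[A] R) →ₗ[R] R :=
    TensorProduct.AlgebraTensorModule.lift (LinearMap.toSpanSingleton R (R →ₗ[A] R) Ts)
  let D : (R ⊗[A] R) →ₗ[R] R :=
    TensorProduct.AlgebraTensorModule.lift (LinearMap.toSpanSingleton R (R →ₗ[A] R) Td)
  have hψ : ∀ f g : R, ψ (f ⊗ₜ[A] g) = f * s g := by
    intro f g
    show (f • Ts) g = f * s g
    rw [LinearMap.smul_apply]
    rfl
  have hD : ∀ f g : R, D (f ⊗ₜ[A] g) = f * der g := by
    intro f g
    show (f • Td) g = f * der g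
    rw [LinearMap.smul_apply]
    rfl
  -- the map φ
  let w : R ⊗[A] R := (X a : R) ⊗ₜ[A] (1 : R) - (1 : R) ⊗ₜ[A] (X b : R)
  let φ : R →ₗ[R] (R ⊗[A] R) := LinearMap.toSpanSingleton R _ w
  have hφ : ∀ r : R, φ r = (r * X a) ⊗ₜ[A] (1 : R) - r ⊗ₜ[A] (X b : R) := by
    intro r
    show r • w = _
    rw [smul_sub, TensorProduct.smul_tmul', TensorProduct.smul_tmul']
    rw [smul_eq_mul, smul_eq_mul, mul_one]
  -- master identity
  have master : ∀ y : R ⊗[A] R, y = (ψ y) • ((1 : R) ⊗ₜ[A] (1 : R)) + φ (D y) := by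
    intro y
    induction y using TensorProduct.induction_on with
    | zero => simp
    | add x y hx hy =>
        rw [map_add, map_add, map_add, add_smul]
        calc x + y = ((ψ x) • ((1:R) ⊗ₜ[A] (1:R)) + φ (D x))
            + ((ψ y) • ((1:R) ⊗ₜ[A] (1:R)) + φ (D y)) := by rw [← hx, ← hy]
          _ = _ := by abel
    | tmul f g =>
        rw [hψ, hD, hφ, TensorProduct.smul_tmul', smul_eq_mul, mul_one]
        -- goal : f ⊗ₜ g = (f * s g) ⊗ₜ 1 + ((f * der g * X a) ⊗ₜ 1 - (f * der g) ⊗ₜ X b)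
        have hslide : (f * der g) ⊗ₜ[A] (X b : R) = f ⊗ₜ[A] (der g * X b) := by
          have : f * der g = (⟨der g, der_memA g⟩ : A) • f := (mul_comm _ _).trans rfl
          rw [this, TensorProduct.smul_tmul]
          rfl
        have hinv : g + der g * X b ∈ A := by
          rw [hmem, map_add, map_mul, der_invariant, hsXb]
          linear_combination key g
        have hslide2 : f ⊗ₜ[A] (g + der g * X b) = (f * (g + der g * X b)) ⊗ₜ[A] (1 : R) := by
          have : (f * (g + der g * X b)) = (⟨g + der g * X b, hinv⟩ : A) • f :=
            (mul_comm _ _).trans rfl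
          rw [this, TensorProduct.smul_tmul]
          congr 1
          exact (mul_one _).symm
        have hcoef : f * (g + der g * X b) = f * s g + f * der g * X a := by
          linear_combination (-f) * key g
        have : f ⊗ₜ[A] g = f ⊗ₜ[A] (g + der g * X b) - (f * der g) ⊗ₜ[A] (X b : R) := by
          rw [hslide, ← TensorProduct.tmul_sub]
          congr 1
          ring
        rw [this, hslide2, hcoef, TensorProduct.add_tmul]
        abel
  have hψφ : ∀ r : R, ψ (φ r) = 0 := by
    intro r
    rw [hφ, map_sub, hψ, hψ, hsXb, map_one, mul_one]
    ring
  have hDφ : ∀ r : R, D (φ r) = r := by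
    intro r
    rw [hφ, map_sub, hD, hD, der_one, der_Xb]
    ring
  refine ⟨φ, ψ, hφ, fun f g => hψ f g, ?_, ?_, ?_⟩
  · intro x y hxy
    calc x = D (φ x) := (hDφ x).symm
      _ = D (φ y) := by rw [hxy]
      _ = y := hDφ y
  · intro r
    exact ⟨r ⊗ₜ[A] 1, by rw [hψ, map_one, mul_one]⟩
  · intro y
    constructor
    · intro hy
      refine ⟨D y, ?_⟩
      have := master y
      rw [hy, zero_smul, zero_add] at this
      exact this.symm
    · rintro ⟨r, rfl⟩
      exact hψφ r
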